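/- arXiv:2506.20260 — 5 statements merged into one kernel-verified Lean document; each statement's English description precedes it below -/
import Mathlib

section
/- D-preferred argumentative ensembling satisfies model agreement: if two models M_i, M_j belong to the same d-preferred extension of the corresponding BAF, then M_i(x) = M_j(x). -/
/-- Set-attack in a bipolar argumentation framework: direct, indirect
(attack followed by a nonempty chain of supports), or supported
(nonempty chain of supports followed by an attack). -/
def SetAttacks {α : Type*} (att sup : α → α → Prop) (T : Set α) (a : α) : Prop :=
  ∃ b ∈ T, att b a ∨ (∃ c, att b c ∧ Relation.TransGen sup c a) ∨
    (∃ c, Relation.TransGen sup b c ∧ att c a)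

def SetSupports {α : Type*} (sup : α → α → Prop) (T : Set α) (a : α) : Prop :=
  ∃ b ∈ T, sup b a

def ConflictFree {α : Type*} (att sup : α → α → Prop) (T : Set α) : Prop :=
  ∀ a ∈ T, ¬ SetAttacks att sup T a

def Safe {α : Type*} (att sup : α → α → Prop) (T : Set α) : Prop :=
  ¬ ∃ a, SetAttacks att sup T a ∧ (SetSupports sup T a ∨ a ∈ T)

def Defends {α : Type*} (att sup : α → α → Prop) (T : Set α) (a : α) : Prop :=
  ∀ b, SetAttacks att sup {b} a → ∃ c ∈ T, SetAttacks att sup {c} b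

def DAdmissible {α : Type*} (att sup : α → α → Prop) (T : Set α) : Prop :=
  ConflictFree att sup T ∧ ∀ a ∈ T, Defends att sup T a

def SAdmissible {α : Type*} (att sup : α → α → Prop) (T : Set α) : Prop :=
  Safe att sup T ∧ ∀ a ∈ T, Defends att sup T a

def CAdmissible {α : Type*} (att sup : α → α → Prop) (T : Set α) : Prop :=
  ConflictFree att sup T ∧ (∀ a ∈ T, ∀ b, sup a b → b ∈ T) ∧ ∀ a ∈ T, Defends att sup T a

def DPreferred {α : Type*} (att sup : α → α → Prop) (T : Set α) : Prop :=
  DAdmissible att sup T ∧ ∀ U, DAdmissible att sup U → T ⊆ U → U = T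

def SPreferred {α : Type*} (att sup : α → α → Prop) (T : Set α) : Prop :=
  SAdmissible att sup T ∧ ∀ U, SAdmissible att sup U → T ⊆ U → U = T

def CPreferred {α : Type*} (att sup : α → α → Prop) (T : Set α) : Prop :=
  CAdmissible att sup T ∧ ∀ U, CAdmissible att sup U → T ⊆ U → U = T

def Stable {α : Type*} (att sup : α → α → Prop) (T : Set α) : Prop :=
  ConflictFree att sup T ∧ ∀ a, a ∉ T → SetAttacks att sup T a

/-- Attack relation of the BAF corresponding to an MM instance.
Sum.inl i is the argument for model M_i, Sum.inr i the one for CE c_i.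
ge i j means M_i ⪰ M_j. -/
def mmAtt {X ι : Type*} (Mod : ι → X → Bool) (c : ι → X) (x : X)
    (ge : ι → ι → Prop) : ι ⊕ ι → ι ⊕ ι → Prop
  | Sum.inl i, Sum.inl j => Mod i x ≠ Mod j x ∧ ge i j
  | Sum.inl i, Sum.inr j => Mod i (c j) = Mod i x ∧ ge i j
  | Sum.inr j, Sum.inl i => Mod i (c j) = Mod i x ∧ ge j i
  | Sum.inr _, Sum.inr _ => False

/-- Support relation of the MM-BAF: mutual supports between M_i and c_i. -/
def mmSup {ι : Type*} : ι ⊕ ι → ι ⊕ ι → Prop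
  | Sum.inl i, Sum.inr j => i = j
  | Sum.inr i, Sum.inl j => i = j
  | _, _ => False

/-- D-preferred argumentative ensembling satisfies model agreement: two models
in the same d-preferred extension of the MM-BAF assign the same label to x. -/
theorem dPreferred_model_agreement {X ι : Type*} (Mod : ι → X → Bool) (c : ι → X)
    (x : X) (ge : ι → ι → Prop)
    (hval : ∀ i, Mod i (c i) ≠ Mod i x)
    (hrefl : ∀ i, ge i i) (htrans : ∀ i j k, ge i j → ge j k → ge i k)
    (htot : ∀ i j, ge i j ∨ ge j i)
    (T : Set (ι ⊕ ι)) (hT : DPreferred (mmAtt Mod c x ge) mmSup T) :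
    ∀ i j : ι, Sum.inl i ∈ T → Sum.inl j ∈ T → Mod i x = Mod j x := by
  intro i j hi hj
  by_contra hne
  obtain ⟨⟨hcf, _⟩, _⟩ := hT
  rcases htot i j with h | h
  · exact hcf (Sum.inl j) hj ⟨Sum.inl i, hi, Or.inl ⟨hne, h⟩⟩
  · exact hcf (Sum.inl i) hi ⟨Sum.inl j, hj, Or.inl ⟨fun e => hne e.symm, h⟩⟩
end

section
/- S-preferred extensions of the MM-BAF satisfy counterfactual coherence: for any s-preferred extension P, and any index i, M_i ∈ P if and only if c_i ∈ P. -/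
section Aux
variable {ι : Type*}

/-- The "mate" of an argument: swaps model and counterfactual. -/
def mmMate : ι ⊕ ι → ι ⊕ ι := Sum.elim Sum.inr Sum.inl

lemma mmMate_mate (a : ι ⊕ ι) : mmMate (mmMate a) = a := by cases a <;> rfl

lemma mmSup_iff (a b : ι ⊕ ι) : mmSup a b ↔ b = mmMate a := by
  cases a <;> cases b <;> simp [mmSup, mmMate, eq_comm]

lemma transGen_mmSup (a b : ι ⊕ ι) :
    Relation.TransGen (mmSup (ι := ι)) a b ↔ b = mmMate a ∨ b = a := by
  constructor
  · intro h
    induction h with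
    | single h => exact Or.inl ((mmSup_iff _ _).1 h)
    | tail _ h ih =>
      rcases ih with rfl | rfl
      · right; rw [(mmSup_iff _ _).1 h, mmMate_mate]
      · left; exact (mmSup_iff _ _).1 h
  · rintro (rfl | rfl)
    · exact Relation.TransGen.single ((mmSup_iff _ _).2 rfl)
    · exact Relation.TransGen.tail (Relation.TransGen.single ((mmSup_iff _ _).2 rfl))
        ((mmSup_iff _ _).2 (mmMate_mate _).symm)

lemma setAttacks_iff (att : ι ⊕ ι → ι ⊕ ι → Prop) (T : Set (ι ⊕ ι)) (a : ι ⊕ ι) :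
    SetAttacks att mmSup T a ↔
      ∃ b ∈ T, att b a ∨ att b (mmMate a) ∨ att (mmMate b) a := by
  unfold SetAttacks
  refine exists_congr fun b => and_congr_right fun _ => ?_
  constructor
  · rintro (h | ⟨c, hc, hs⟩ | ⟨c, hs, hc⟩)
    · exact Or.inl h
    · rcases (transGen_mmSup _ _).1 hs with rfl | rfl
      · right; left; rwa [mmMate_mate]
      · exact Or.inl hc
    · rcases (transGen_mmSup _ _).1 hs with rfl | rfl
      · exact Or.inr (Or.inr hc)
      · exact Or.inl hc
  · rintro (h | h | h)
    · exact Or.inl h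
    · exact Or.inr (Or.inl ⟨mmMate a, h, (transGen_mmSup _ _).2 (Or.inl (mmMate_mate a).symm)⟩)
    · exact Or.inr (Or.inr ⟨mmMate b, (transGen_mmSup _ _).2 (Or.inl rfl), h⟩)

lemma setAttacks_closure_iff (att : ι ⊕ ι → ι ⊕ ι → Prop) (P : Set (ι ⊕ ι)) (a : ι ⊕ ι) :
    SetAttacks att mmSup {z | z ∈ P ∨ mmMate z ∈ P} a ↔
      SetAttacks att mmSup P a ∨ SetAttacks att mmSup P (mmMate a) := by
  rw [setAttacks_iff, setAttacks_iff, setAttacks_iff]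
  constructor
  · rintro ⟨b, hb | hb, h⟩
    · rcases h with h | h | h
      · exact Or.inl ⟨b, hb, Or.inl h⟩
      · exact Or.inr ⟨b, hb, Or.inl h⟩
      · exact Or.inl ⟨b, hb, Or.inr (Or.inr h)⟩
    · rcases h with h | h | h
      · exact Or.inl ⟨mmMate b, hb, Or.inr (Or.inr (by rwa [mmMate_mate]))⟩
      · exact Or.inr ⟨mmMate b, hb, Or.inr (Or.inr (by rwa [mmMate_mate]))⟩
      · exact Or.inl ⟨mmMate b, hb, Or.inl h⟩
  · rintro (⟨b, hb, h⟩ | ⟨b, hb, h⟩)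
    · exact ⟨b, Or.inl hb, h⟩
    · rcases h with h | h | h
      · exact ⟨b, Or.inl hb, Or.inr (Or.inl h)⟩
      · exact ⟨b, Or.inl hb, Or.inl (by rwa [mmMate_mate] at h)⟩
      · exact ⟨mmMate b, Or.inr (by rwa [mmMate_mate]), Or.inr (Or.inl h)⟩

lemma sAdmissible_closure (att : ι ⊕ ι → ι ⊕ ι → Prop) (P : Set (ι ⊕ ι))
    (hP : SAdmissible att mmSup P) :
    SAdmissible att mmSup {z | z ∈ P ∨ mmMate z ∈ P} := by
  obtain ⟨hsafe, hdef⟩ := hP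
  constructor
  · -- Safe
    rintro ⟨a, hatt, hside⟩
    have hside' : a ∈ P ∨ mmMate a ∈ P := by
      rcases hside with ⟨b, hb, hsup⟩ | h
      · rw [mmSup_iff] at hsup
        have hba : b = mmMate a := by rw [hsup, mmMate_mate]
        rw [hba] at hb
        rcases hb with hb | hb
        · exact Or.inr hb
        · exact Or.inl (by rwa [mmMate_mate] at hb)
      · exact h
    rcases (setAttacks_closure_iff att P a).1 hatt with h | h
    · rcases hside' with ha | ha
      · exact hsafe ⟨a, h, Or.inr ha⟩
      · exact hsafe ⟨a, h, Or.inl ⟨mmMate a, ha, (mmSup_iff _ _).2 (mmMate_mate a).symm⟩⟩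
    · rcases hside' with ha | ha
      · exact hsafe ⟨mmMate a, h, Or.inl ⟨a, ha, (mmSup_iff _ _).2 rfl⟩⟩
      · exact hsafe ⟨mmMate a, h, Or.inr ha⟩
  · -- Defends
    rintro a (ha | ha) b hb
    · obtain ⟨c, hc, hcb⟩ := hdef a ha b hb
      exact ⟨c, Or.inl hc, hcb⟩
    · -- a = mate a₀ with a₀ := mmMate a ∈ P
      rw [setAttacks_iff] at hb
      obtain ⟨b', hb', h⟩ := hb
      obtain rfl : b' = b := hb'
      rcases h with h | h | h
      · -- att b' a : attack on mate of a₀, clause 2 for a₀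
        have hb2 : SetAttacks att mmSup {b'} (mmMate a) :=
          (setAttacks_iff att {b'} _).2 ⟨b', rfl,
            Or.inr (Or.inl (by rwa [mmMate_mate]))⟩
        obtain ⟨c, hc, hcb⟩ := hdef _ ha b' hb2
        exact ⟨c, Or.inl hc, hcb⟩
      · -- att b' (mmMate a) : direct attack on a₀
        have hb2 : SetAttacks att mmSup {b'} (mmMate a) :=
          (setAttacks_iff att {b'} _).2 ⟨b', rfl, Or.inl h⟩
        obtain ⟨c, hc, hcb⟩ := hdef _ ha b' hb2
        exact ⟨c, Or.inl hc, hcb⟩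
      · -- att (mmMate b') a : mate b' attacks a₀ via clause 2
        have hb2 : SetAttacks att mmSup {mmMate b'} (mmMate a) :=
          (setAttacks_iff att _ _).2 ⟨mmMate b', rfl,
            Or.inr (Or.inl (by rwa [mmMate_mate]))⟩
        obtain ⟨c, hc, hcb⟩ := hdef _ ha (mmMate b') hb2
        rw [setAttacks_iff] at hcb
        obtain ⟨c', hc', h'⟩ := hcb
        obtain rfl : c' = c := hc'
        rcases h' with h' | h' | h'
        · -- att c' (mmMate b')
          exact ⟨c', Or.inl hc, (setAttacks_iff att {c'} b').2
            ⟨c', rfl, Or.inr (Or.inl h')⟩⟩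
        · -- att c' b' (since mmMate (mmMate b') = b')
          rw [mmMate_mate] at h'
          exact ⟨c', Or.inl hc, (setAttacks_iff att {c'} b').2 ⟨c', rfl, Or.inl h'⟩⟩
        · -- att (mmMate c') (mmMate b') : use mmMate c' ∈ closure
          exact ⟨mmMate c', Or.inr (by rwa [mmMate_mate]),
            (setAttacks_iff att _ b').2 ⟨mmMate c', rfl, Or.inr (Or.inl h')⟩⟩

end Aux

/-- S-preferred extensions of the MM-BAF satisfy counterfactual coherence:
a model M_i is in the extension iff its counterfactual c_i is. -/
theorem sPreferred_counterfactual_coherence {X ι : Type*} (Mod : ι → X → Bool)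
    (c : ι → X) (x : X) (ge : ι → ι → Prop)
    (hval : ∀ i, Mod i (c i) ≠ Mod i x)
    (hrefl : ∀ i, ge i i) (htrans : ∀ i j k, ge i j → ge j k → ge i k)
    (htot : ∀ i j, ge i j ∨ ge j i)
    (P : Set (ι ⊕ ι)) (hP : SPreferred (mmAtt Mod c x ge) mmSup P) :
    ∀ i : ι, Sum.inl i ∈ P ↔ Sum.inr i ∈ P := by
  intro i
  obtain ⟨hadm, hmax⟩ := hP
  have hQ := sAdmissible_closure (mmAtt Mod c x ge) P hadm
  have heq := hmax _ hQ (fun z hz => Or.inl hz)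
  constructor
  · intro h
    have : Sum.inr i ∈ {z | z ∈ P ∨ mmMate z ∈ P} := Or.inr h
    rwa [heq] at this
  · intro h
    have : Sum.inl i ∈ {z | z ∈ P ∨ mmMate z ∈ P} := Or.inr h
    rwa [heq] at this
end

section
/- If in the MM-BAF there exists a model M_i strictly preferred to all other models, then M_i belongs to every s-preferred extension. -/
private lemma mm_sup_symm {ι : Type*} {a b : ι ⊕ ι} (h : mmSup a b) : mmSup b a := by
  cases a <;> cases b <;> simp_all [mmSup]

private lemma mm_sup_idx {ι : Type*} {a b : ι ⊕ ι} (h : mmSup a b) :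
    Sum.elim id id a = Sum.elim id id b := by
  cases a <;> cases b <;> simp_all [mmSup]

private lemma mm_sup_chain_idx {ι : Type*} {a b : ι ⊕ ι}
    (h : Relation.TransGen (mmSup (ι := ι)) a b) :
    Sum.elim id id a = Sum.elim id id b := by
  induction h with
  | single h => exact mm_sup_idx h
  | tail _ h ih => exact ih.trans (mm_sup_idx h)

private lemma mm_idx_eq {ι : Type*} {i : ι} {a : ι ⊕ ι}
    (h : Sum.elim id id a = i) : a = Sum.inl i ∨ a = Sum.inr i := by
  cases a <;> simp_all

/-- No single argument attacks `inl i` or `inr i` when `i` is dominant. -/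
private lemma mm_no_att {X ι : Type*} {Mod : ι → X → Bool} {c : ι → X} {x : X}
    {ge : ι → ι → Prop} {i : ι}
    (hval : ∀ k, Mod k (c k) ≠ Mod k x)
    (hdom : ∀ j, j ≠ i → ge i j ∧ ¬ ge j i)
    {b a : ι ⊕ ι} (ha : a = Sum.inl i ∨ a = Sum.inr i) :
    ¬ mmAtt Mod c x ge b a := by
  rcases ha with rfl | rfl <;> rcases b with j | j <;> rintro ⟨h1, h2⟩
  · rcases eq_or_ne j i with rfl | hj
    · exact h1 rfl
    · exact (hdom j hj).2 h2
  · rcases eq_or_ne j i with rfl | hj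
    · exact hval j h1
    · exact (hdom j hj).2 h2
  · rcases eq_or_ne j i with rfl | hj
    · exact hval j h1
    · exact (hdom j hj).2 h2

/-- No set at all can set-attack `inl i` or `inr i`. -/
private lemma mm_no_setatt {X ι : Type*} {Mod : ι → X → Bool} {c : ι → X} {x : X}
    {ge : ι → ι → Prop} {i : ι}
    (hval : ∀ k, Mod k (c k) ≠ Mod k x)
    (hdom : ∀ j, j ≠ i → ge i j ∧ ¬ ge j i)
    (T : Set (ι ⊕ ι)) {a : ι ⊕ ι} (ha : a = Sum.inl i ∨ a = Sum.inr i) :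
    ¬ SetAttacks (mmAtt Mod c x ge) mmSup T a := by
  rintro ⟨b, hb, h | ⟨d, hbd, hchain⟩ | ⟨d, hchain, hda⟩⟩
  · exact mm_no_att hval hdom ha h
  · have hidx : Sum.elim id id d = i := by
      have := mm_sup_chain_idx hchain
      rcases ha with rfl | rfl <;> simpa using this
    exact mm_no_att hval hdom (mm_idx_eq hidx) hbd
  · exact mm_no_att hval hdom ha hda

/-- If a model M_i is strictly preferred to all other models, then M_i
belongs to every s-preferred extension of the MM-BAF. -/
theorem dominant_model_in_every_sPreferred {X ι : Type*} (Mod : ι → X → Bool)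
    (c : ι → X) (x : X) (ge : ι → ι → Prop)
    (hval : ∀ k, Mod k (c k) ≠ Mod k x)
    (hrefl : ∀ k, ge k k) (htrans : ∀ k l m, ge k l → ge l m → ge k m)
    (htot : ∀ k l, ge k l ∨ ge l k)
    (i : ι) (hdom : ∀ j, j ≠ i → ge i j ∧ ¬ ge j i) :
    ∀ P : Set (ι ⊕ ι), SPreferred (mmAtt Mod c x ge) mmSup P → Sum.inl i ∈ P := by
  intro P hP
  set att := mmAtt Mod c x ge with hatt_def
  obtain ⟨⟨hsafe, hdef⟩, hmax⟩ := hP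
  have noatt : ∀ (T : Set (ι ⊕ ι)) {a : ι ⊕ ι}, (a = Sum.inl i ∨ a = Sum.inr i) →
      ¬ SetAttacks att mmSup T a := fun T _ ha => mm_no_setatt hval hdom T ha
  -- key: {inl i} cannot set-attack anything in P or supported by P
  have key : ∀ a, SetAttacks att mmSup {Sum.inl i} a →
      (a ∈ P ∨ SetSupports mmSup P a) → False := by
    rintro a ⟨b, hb, hforms⟩ hmem
    rw [Set.mem_singleton_iff] at hb; subst hb
    rcases hmem with haP | ⟨b', hb'P, hsup⟩
    · -- a ∈ P : find a single attacker z ∈ {inl i, inr i} of a, use defense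
      have : ∃ z, (z = Sum.inl i ∨ z = Sum.inr i) ∧ SetAttacks att mmSup {z} a := by
        rcases hforms with h | ⟨d, hbd, hchain⟩ | ⟨d, hchain, hda⟩
        · exact ⟨Sum.inl i, Or.inl rfl, ⟨_, rfl, Or.inl h⟩⟩
        · exact ⟨Sum.inl i, Or.inl rfl, ⟨_, rfl, Or.inr (Or.inl ⟨d, hbd, hchain⟩)⟩⟩
        · have hidx : Sum.elim id id d = i := by
            simpa using (mm_sup_chain_idx hchain).symm
          exact ⟨d, mm_idx_eq hidx, ⟨_, rfl, Or.inl hda⟩⟩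
      obtain ⟨z, hz, hzatt⟩ := this
      obtain ⟨e, heP, heatt⟩ := hdef a haP z hzatt
      exact noatt {e} hz heatt
    · -- a supported by b' ∈ P : build a single attack on b'
      have hsup' : mmSup a b' := mm_sup_symm hsup
      have : ∃ z, (z = Sum.inl i ∨ z = Sum.inr i) ∧ SetAttacks att mmSup {z} b' := by
        rcases hforms with h | ⟨d, hbd, hchain⟩ | ⟨d, hchain, hda⟩
        · exact ⟨Sum.inl i, Or.inl rfl,
            ⟨_, rfl, Or.inr (Or.inl ⟨a, h, Relation.TransGen.single hsup'⟩)⟩⟩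
        · exact ⟨Sum.inl i, Or.inl rfl,
            ⟨_, rfl, Or.inr (Or.inl ⟨d, hbd, hchain.tail hsup'⟩)⟩⟩
        · have hidx : Sum.elim id id d = i := by
            simpa using (mm_sup_chain_idx hchain).symm
          exact ⟨d, mm_idx_eq hidx,
            ⟨_, rfl, Or.inr (Or.inl ⟨a, hda, Relation.TransGen.single hsup'⟩)⟩⟩
      obtain ⟨z, hz, hzatt⟩ := this
      obtain ⟨e, heP, heatt⟩ := hdef b' hb'P z hzatt
      exact noatt {e} hz heatt
  -- sup from inl i only reaches inr i
  have sup_inl : ∀ {a : ι ⊕ ι}, mmSup (Sum.inl i) a → a = Sum.inr i := by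
    rintro (j | j) h
    · exact absurd h (by simp [mmSup])
    · have : i = j := h
      simp [this]
  set T : Set (ι ⊕ ι) := insert (Sum.inl i) P with hT
  have hsub : P ⊆ T := Set.subset_insert _ _
  have hSadm : SAdmissible att mmSup T := by
    constructor
    · rintro ⟨a, ⟨b, hb, hatt⟩, hsm⟩
      rcases hb with rfl | hbP
      · -- attacker is inl i
        have hA : SetAttacks att mmSup {Sum.inl i} a := ⟨_, rfl, hatt⟩
        rcases hsm with ⟨b', hb', hsup⟩ | haT
        · rcases hb' with rfl | hb'P
          · exact noatt _ (Or.inr (sup_inl hsup)) hA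
          · exact key a hA (Or.inr ⟨b', hb'P, hsup⟩)
        · rcases haT with rfl | haP
          · exact noatt _ (Or.inl rfl) hA
          · exact key a hA (Or.inl haP)
      · -- attacker is in P
        have hA : SetAttacks att mmSup P a := ⟨b, hbP, hatt⟩
        rcases hsm with ⟨b', hb', hsup⟩ | haT
        · rcases hb' with rfl | hb'P
          · exact noatt P (Or.inr (sup_inl hsup)) hA
          · exact hsafe ⟨a, hA, Or.inl ⟨b', hb'P, hsup⟩⟩
        · rcases haT with rfl | haP
          · exact noatt P (Or.inl rfl) hA
          · exact hsafe ⟨a, hA, Or.inr haP⟩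
    · intro a haT b hb
      rcases haT with rfl | haP
      · exact absurd hb (noatt _ (Or.inl rfl))
      · obtain ⟨d, hd, hdd⟩ := hdef a haP b hb
        exact ⟨d, hsub hd, hdd⟩
  have hTP := hmax T hSadm hsub
  rw [← hTP]
  exact Set.mem_insert _ _
end

section
/- If in the MM-BAF there exists a model M_i that is weakly preferred to all models (M_i ⪰ M_j for all j), then there exists an s-preferred extension containing M_i. -/
section Aux

variable {X ι : Type*} {Mod : ι → X → Bool} {c : ι → X} {x : X} {ge : ι → ι → Prop}

private def mmIdx : ι ⊕ ι → ι := Sum.elim id id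

private lemma mmSup_idx {a b : ι ⊕ ι} (h : mmSup a b) : mmIdx a = mmIdx b := by
  cases a <;> cases b <;> simp_all [mmSup, mmIdx]

private lemma transGen_mmSup_idx {a b : ι ⊕ ι} (h : Relation.TransGen mmSup a b) :
    mmIdx a = mmIdx b := by
  induction h with
  | single h => exact mmSup_idx h
  | tail _ h ih => exact ih.trans (mmSup_idx h)

private lemma idx_cases (a : ι ⊕ ι) (k : ι) (h : mmIdx a = k) :
    a = Sum.inl k ∨ a = Sum.inr k := by
  cases a <;> simp_all [mmIdx]

private lemma setAttacks_singleton {att sup : ι ⊕ ι → ι ⊕ ι → Prop} {b a : ι ⊕ ι} :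
    SetAttacks att sup {b} a ↔
      att b a ∨ (∃ c, att b c ∧ Relation.TransGen sup c a) ∨
        (∃ c, Relation.TransGen sup b c ∧ att c a) := by
  constructor
  · rintro ⟨b', hb', h⟩; rcases hb' with rfl; exact h
  · exact fun h => ⟨b, rfl, h⟩

private lemma sup_li_ri (k : ι) : mmSup (Sum.inl k : ι ⊕ ι) (Sum.inr k) := by simp [mmSup]
private lemma sup_ri_li (k : ι) : mmSup (Sum.inr k : ι ⊕ ι) (Sum.inl k) := by simp [mmSup]

/-- Any set-attacker of `inl i` is counterattacked by `{inl i}` when `i` dominates. -/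
private lemma counter (i : ι) (hdom : ∀ j, ge i j) (b : ι ⊕ ι)
    (h : SetAttacks (mmAtt Mod c x ge) mmSup {b} (Sum.inl i)) :
    SetAttacks (mmAtt Mod c x ge) mmSup {Sum.inl i} b := by
  rw [setAttacks_singleton] at h ⊢
  have key : ∀ b' : ι ⊕ ι, (b' = b ∨ Relation.TransGen mmSup b b') →
      mmAtt Mod c x ge b' (Sum.inl i) →
      (mmAtt Mod c x ge (Sum.inl i) b ∨
        (∃ d, mmAtt Mod c x ge (Sum.inl i) d ∧ Relation.TransGen mmSup d b) ∨
        (∃ d, Relation.TransGen mmSup (Sum.inl i) d ∧ mmAtt Mod c x ge d b)) := by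
    rintro b' hb' hatt
    have hbb' : mmIdx b' = mmIdx b := by
      rcases hb' with rfl | h'
      · rfl
      · exact (transGen_mmSup_idx h').symm
    rcases b' with j | j
    · obtain ⟨hne, -⟩ := hatt
      have hatk : mmAtt Mod c x ge (Sum.inl i) (Sum.inl j) := ⟨fun h => hne h.symm, hdom j⟩
      rcases idx_cases b j hbb'.symm with rfl | rfl
      · exact Or.inl hatk
      · exact Or.inr (Or.inl ⟨Sum.inl j, hatk, Relation.TransGen.single (sup_li_ri j)⟩)
    · obtain ⟨heq, -⟩ := hatt
      have hatk : mmAtt Mod c x ge (Sum.inl i) (Sum.inr j) := ⟨heq, hdom j⟩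
      rcases idx_cases b j hbb'.symm with rfl | rfl
      · exact Or.inr (Or.inl ⟨Sum.inr j, hatk, Relation.TransGen.single (sup_ri_li j)⟩)
      · exact Or.inl hatk
  rcases h with hd | ⟨d, hbd, hda⟩ | ⟨d, hbd, hda⟩
  · exact key b (Or.inl rfl) hd
  · -- att b d, TransGen sup d (inl i)
    rcases idx_cases d i (by simpa [mmIdx] using transGen_mmSup_idx hda) with rfl | rfl
    · exact key b (Or.inl rfl) hbd
    · -- b attacks inr i directly: b must be inl j, with Mod j (c i) = Mod j x
      rcases b with j | j
      · obtain ⟨heq, -⟩ := hbd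
        exact Or.inr (Or.inr ⟨Sum.inr i, Relation.TransGen.single (sup_li_ri i), heq, hdom j⟩)
      · exact absurd hbd (by simp [mmAtt])
  · exact key d (Or.inr hbd) hda

/-- `{inl i}` is safe when `i` dominates. -/
private lemma base_safe (hval : ∀ k, Mod k (c k) ≠ Mod k x) :
    ∀ i : ι, Safe (mmAtt Mod c x ge) mmSup {Sum.inl i} := by
  intro i
  rintro ⟨a, hatt, hsup⟩
  have ha : a = Sum.inl i ∨ a = Sum.inr i := by
    rcases hsup with ⟨b, hb, hs⟩ | ha
    · rcases hb with rfl
      cases a with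
      | inl j => exact absurd hs (by simp [mmSup])
      | inr j => right; obtain rfl : i = j := hs; rfl
    · left; exact ha
  rw [setAttacks_singleton] at hatt
  -- all possible attacks from inl i land on inl i or inr i : contradiction with hval
  have noatt : ∀ d : ι ⊕ ι, (d = Sum.inl i ∨ Relation.TransGen mmSup (Sum.inl i) d) →
      ¬ mmAtt Mod c x ge d a := by
    rintro d hd hda
    have hdi : mmIdx d = i := by
      rcases hd with rfl | h'
      · rfl
      · simpa [mmIdx] using (transGen_mmSup_idx h').symm
    rcases idx_cases d i hdi with rfl | rfl <;> rcases ha with rfl | rfl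
    · exact hda.1 rfl
    · exact hval i hda.1
    · exact hval i hda.1
    · exact hda
  rcases hatt with hd | ⟨d, hbd, hda⟩ | ⟨d, hbd, hda⟩
  · exact noatt _ (Or.inl rfl) hd
  · -- att (inl i) d with TransGen d a; d is in pair of a, i.e. pair of i
    have hdi : mmIdx d = i := by
      have := transGen_mmSup_idx hda
      rcases ha with rfl | rfl <;> simpa [mmIdx] using this
    rcases idx_cases d i hdi with rfl | rfl
    · exact hbd.1 rfl
    · exact hval i hbd.1
  · exact noatt _ (Or.inr hbd) hda

end Aux

/-- If a model M_i is weakly preferred to all models, then some s-preferred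
extension of the MM-BAF contains M_i. -/
theorem weakly_dominant_model_in_some_sPreferred {X ι : Type*} [Fintype ι]
    (Mod : ι → X → Bool) (c : ι → X) (x : X) (ge : ι → ι → Prop)
    (hval : ∀ k, Mod k (c k) ≠ Mod k x)
    (hrefl : ∀ k, ge k k) (htrans : ∀ k l m, ge k l → ge l m → ge k m)
    (htot : ∀ k l, ge k l ∨ ge l k)
    (i : ι) (hdom : ∀ j, ge i j) :
    ∃ P : Set (ι ⊕ ι), SPreferred (mmAtt Mod c x ge) mmSup P ∧ Sum.inl i ∈ P := by
  classical
  set att := mmAtt Mod c x ge with hatt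
  set S : Set (Set (ι ⊕ ι)) :=
    {T | SAdmissible att mmSup T ∧ Sum.inl i ∈ T} with hS
  have hbase : ({Sum.inl i} : Set (ι ⊕ ι)) ∈ S := by
    refine ⟨⟨base_safe hval i, ?_⟩, rfl⟩
    rintro a rfl b hb
    exact ⟨Sum.inl i, rfl, counter i hdom b hb⟩
  have hzorn : ∀ C ⊆ S, IsChain (· ⊆ ·) C → C.Nonempty → ∃ ub ∈ S, ∀ s ∈ C, s ⊆ ub := by
    intro C hCS hchain hne
    refine ⟨⋃₀ C, ⟨⟨?_, ?_⟩, ?_⟩, fun s hs => Set.subset_sUnion_of_mem hs⟩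
    · rintro ⟨a, ⟨b, hb, hba⟩, hsupp⟩
      obtain ⟨T₁, hT₁, hbT₁⟩ := hb
      have : ∃ T₂ ∈ C, (SetSupports mmSup T₂ a ∨ a ∈ T₂) := by
        rcases hsupp with ⟨e, ⟨T₂, hT₂, heT₂⟩, he⟩ | ⟨T₂, hT₂, haT₂⟩
        · exact ⟨T₂, hT₂, Or.inl ⟨e, heT₂, he⟩⟩
        · exact ⟨T₂, hT₂, Or.inr haT₂⟩
      obtain ⟨T₂, hT₂, hsup2⟩ := this
      rcases hchain.total hT₁ hT₂ with h12 | h21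
      · exact (hCS hT₂).1.1 ⟨a, ⟨b, h12 hbT₁, hba⟩, hsup2⟩
      · refine (hCS hT₁).1.1 ⟨a, ⟨b, hbT₁, hba⟩, ?_⟩
        rcases hsup2 with ⟨e, heT₂, he⟩ | haT₂
        · exact Or.inl ⟨e, h21 heT₂, he⟩
        · exact Or.inr (h21 haT₂)
    · rintro a ⟨T, hT, haT⟩ b hb
      obtain ⟨e, heT, hatk⟩ := (hCS hT).1.2 a haT b hb
      exact ⟨e, ⟨T, hT, heT⟩, hatk⟩
    · obtain ⟨T, hT⟩ := hne
      exact ⟨T, hT, (hCS hT).2⟩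
  obtain ⟨m, hsub, hmem, hmax⟩ := zorn_subset_nonempty S hzorn _ hbase
  refine ⟨m, ⟨hmem.1, ?_⟩, hsub rfl⟩
  intro U hU hmU
  exact subset_antisymm (hmax ⟨hU, hmU (hsub rfl)⟩ hmU) hmU
end

section
/- In any s-preferred extension P of the MM-BAF, there do not exist two counterfactuals c_i, c_j ∈ P whose generating models disagree on x (i.e., with M_i(x) ≠ M_j(x)). -/
/-- In any s-preferred extension of the MM-BAF there are no two
counterfactuals whose generating models disagree on x. -/
theorem sPreferred_no_disagreeing_counterfactuals {X ι : Type*}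
    (Mod : ι → X → Bool) (c : ι → X) (x : X) (ge : ι → ι → Prop)
    (hval : ∀ k, Mod k (c k) ≠ Mod k x)
    (hrefl : ∀ k, ge k k) (htrans : ∀ k l m, ge k l → ge l m → ge k m)
    (htot : ∀ k l, ge k l ∨ ge l k)
    (P : Set (ι ⊕ ι)) (hP : SPreferred (mmAtt Mod c x ge) mmSup P) :
    ¬ ∃ i j : ι, Sum.inr i ∈ P ∧ Sum.inr j ∈ P ∧ Mod i x ≠ Mod j x := by
  rintro ⟨i, j, hi, hj, hne⟩
  obtain ⟨⟨hsafe, _⟩, _⟩ := hP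
  have key : ∀ i j : ι, Sum.inr i ∈ P → Sum.inr j ∈ P → Mod i x ≠ Mod j x →
      ge i j → False := by
    intro i j hi hj hne hge
    exact hsafe ⟨Sum.inl j,
      ⟨Sum.inr i, hi, Or.inr (Or.inr ⟨Sum.inl i,
        Relation.TransGen.single (show mmSup (Sum.inr i) (Sum.inl i) from rfl),
        ⟨hne, hge⟩⟩)⟩,
      Or.inl ⟨Sum.inr j, hj, show mmSup (Sum.inr j) (Sum.inl j) from rfl⟩⟩
  rcases htot i j with h | h
  · exact key i j hi hj hne h
  · exact key j i hj hi hne.symm h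
end
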